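/- arXiv:2505.02544 — 3 statements merged into one kernel-verified Lean document; each statement's English description precedes it below -/
import Mathlib

section
/- Assume a nested system of fundamental sequences on Γ, and define the norm |α| = min{n > 1 : Γ ⇒_n α}. If β < δ ≤ Γ, then β ≤ δ[|β|]. -/
open Ordinal

/-- A system of fundamental sequences on `Γ`: to each ordinal `α ≤ Γ` we associate a
non-decreasing sequence `fs α n` with `sup {fs α n + 1 : n} = α` for `α ≠ 0`, and `fs 0 n = 0`. -/
structure FSSystem (Γ : Ordinal) where
  fs : Ordinal → ℕ → Ordinal
  fs_zero : ∀ n, fs 0 n = 0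
  mono : ∀ α, α ≤ Γ → Monotone (fs α)
  sup_eq : ∀ α, α ≤ Γ → α ≠ 0 → (⨆ n : ℕ, fs α n + 1) = α

/-- The system is nested: it is never the case, for `γ < β ≤ Γ` and `n > 1`,
that `γ > β[n] > γ[n]`. -/
def FSSystem.Nested {Γ : Ordinal} (S : FSSystem Γ) : Prop :=
  ∀ γ β (n : ℕ), γ < β → β ≤ Γ → 1 < n → ¬ (S.fs γ n < S.fs β n ∧ S.fs β n < γ)

/-- Iterated evaluation `α[s_0][s_1]…[s_{m-1}]` along a list. -/
def FSSystem.evalL {Γ : Ordinal} (S : FSSystem Γ) (α : Ordinal) (s : List ℕ) : Ordinal :=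
  s.foldl S.fs α

/-- `α ⇒_n β`: `β` is obtained from `α` by finitely many applications of `δ ↦ δ[n]`. -/
def FSSystem.Reaches {Γ : Ordinal} (S : FSSystem Γ) (n : ℕ) (α β : Ordinal) : Prop :=
  ∃ k : ℕ, (fun δ => S.fs δ n)^[k] α = β

namespace FSSystem

variable {Γ : Ordinal} (S : FSSystem Γ)

/-- `fs α n + 1 ≤ α` for nonzero `α ≤ Γ`. -/
lemma fs_add_one_le {α : Ordinal} (hα : α ≤ Γ) (h0 : α ≠ 0) (n : ℕ) :
    S.fs α n + 1 ≤ α := by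
  conv_rhs => rw [← S.sup_eq α hα h0]
  exact le_ciSup (Ordinal.bddAbove_range _) n

/-- `fs α n < α` for nonzero `α ≤ Γ`. -/
lemma fs_lt {α : Ordinal} (hα : α ≤ Γ) (h0 : α ≠ 0) (n : ℕ) :
    S.fs α n < α := by
  have h := S.fs_add_one_le hα h0 n
  rwa [Ordinal.add_one_eq_succ, Order.succ_le_iff] at h

/-- `fs α n ≤ α` for `α ≤ Γ`. -/
lemma fs_le {α : Ordinal} (hα : α ≤ Γ) (n : ℕ) : S.fs α n ≤ α := by
  rcases eq_or_ne α 0 with rfl | h0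
  · rw [S.fs_zero]
  · exact (S.fs_lt hα h0 n).le

/-- If at index `n` nothing above `x` jumps below `x`, then every `α` with
`x ≤ α ≤ Γ` reaches `x` at `n`. -/
lemma reaches_of_no_jumper {x : Ordinal} {n : ℕ}
    (h : ∀ γ, x < γ → γ ≤ Γ → x ≤ S.fs γ n) :
    ∀ α, x ≤ α → α ≤ Γ → S.Reaches n α x := by
  intro α
  induction α using Ordinal.induction with
  | h α IH =>
    intro hxα hαΓ
    rcases eq_or_lt_of_le hxα with rfl | hlt
    · exact ⟨0, rfl⟩
    · have h0 : α ≠ 0 := (lt_of_le_of_lt (zero_le (a := x)) hlt).ne'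
      have hfs_lt : S.fs α n < α := S.fs_lt hαΓ h0 n
      have h1 : x ≤ S.fs α n := h α hlt hαΓ
      have h2 : S.fs α n ≤ Γ := hfs_lt.le.trans hαΓ
      obtain ⟨k, hk⟩ := IH (S.fs α n) hfs_lt h1 h2
      exact ⟨k + 1, by rw [Function.iterate_succ_apply]; exact hk⟩

/-- Existence of the norm: in a nested system every `x ≤ Γ` is reachable from `Γ`
at some index `n > 1`. -/
lemma exists_reaches (hN : S.Nested) {x : Ordinal} (hx : x ≤ Γ) :
    ∃ n : ℕ, 1 < n ∧ S.Reaches n Γ x := by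
  by_cases hc : ∃ n : ℕ, 1 < n ∧ ∀ γ, x < γ → γ ≤ Γ → x ≤ S.fs γ n
  · obtain ⟨n, hn, h⟩ := hc
    exact ⟨n, hn, S.reaches_of_no_jumper h Γ hx le_rfl⟩
  · exfalso
    push_neg at hc
    -- least jumper at each index
    set Jset : ℕ → Set Ordinal :=
      fun n => {γ | x < γ ∧ γ ≤ Γ ∧ S.fs γ n < x} with hJdef
    have hne : ∀ n : ℕ, 1 < n → (Jset n).Nonempty := by
      intro n hn
      obtain ⟨γ, h1, h2, h3⟩ := hc n hn
      exact ⟨γ, h1, h2, h3⟩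
    set j : ℕ → Ordinal := fun n => sInf (Jset n) with hjdef
    have hmem : ∀ n : ℕ, 1 < n → j n ∈ Jset n := fun n hn => csInf_mem (hne n hn)
    have hjmono : ∀ m n : ℕ, 1 < m → m ≤ n → j m ≤ j n := by
      intro m n hm hmn
      have hn : 1 < n := lt_of_lt_of_le hm hmn
      obtain ⟨h1, h2, h3⟩ := hmem n hn
      refine csInf_le (OrderBot.bddBelow _) ?_
      exact ⟨h1, h2, lt_of_le_of_lt (S.mono _ h2 hmn) h3⟩
    set u : Ordinal := ⨆ i : ℕ, j (i + 2) with hudef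
    have hju : ∀ N : ℕ, 1 < N → j N ≤ u := by
      intro N hN
      have hNe : j N = j ((N - 2) + 2) := by congr 1; omega
      rw [hNe]
      exact le_ciSup (Ordinal.bddAbove_range _) (N - 2)
    have hxu : x < u := lt_of_lt_of_le (hmem 2 one_lt_two).1 (hju 2 one_lt_two)
    have hu0 : u ≠ 0 := (lt_of_le_of_lt (zero_le (a := x)) hxu).ne'
    have huΓ : u ≤ Γ := by
      refine ciSup_le fun i => ?_
      exact (hmem (i + 2) (by omega)).2.1
    -- find an index where `u`'s sequence has climbed past `x`
    have hn₀ : ∃ n₀ : ℕ, 1 < n₀ ∧ x ≤ S.fs u n₀ := by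
      by_contra hno
      push_neg at hno
      have hux : u ≤ x := by
        rw [← S.sup_eq u huΓ hu0]
        refine ciSup_le fun n => ?_
        have h2 : S.fs u (max n 2) < x := hno _ (by omega)
        have h3 : S.fs u n ≤ S.fs u (max n 2) := S.mono u huΓ (le_max_left n 2)
        rw [Ordinal.add_one_eq_succ, Order.succ_le_iff]
        exact lt_of_le_of_lt h3 h2
      exact absurd hux (not_le.mpr hxu)
    obtain ⟨n₀, hn₀1, hn₀x⟩ := hn₀
    -- key: every late least-jumper is bounded by `fs u n₀`
    have key : ∀ N : ℕ, n₀ ≤ N → j N ≤ S.fs u n₀ := by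
      intro N hn₀N
      have hN1 : 1 < N := lt_of_lt_of_le hn₀1 hn₀N
      obtain ⟨hj1, hj2, hj3⟩ := hmem N hN1
      have hjNu : j N < u := by
        rcases lt_or_eq_of_le (hju N hN1) with hlt | heq
        · exact hlt
        · exfalso
          have hxfs : x ≤ S.fs u N := le_trans hn₀x (S.mono u huΓ hn₀N)
          rw [← heq] at hxfs
          exact absurd hj3 (not_lt.mpr hxfs)
      have hnest := hN (j N) u n₀ hjNu huΓ hn₀1
      have hsmall : S.fs (j N) n₀ < S.fs u n₀ :=
        lt_of_lt_of_le (lt_of_le_of_lt (S.mono (j N) hj2 hn₀N) hj3) hn₀x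
      exact le_of_not_gt fun hcon => hnest ⟨hsmall, hcon⟩
    have hufs : u ≤ S.fs u n₀ := by
      refine ciSup_le fun i => ?_
      calc j (i + 2) ≤ j (max (i + 2) n₀) := hjmono _ _ (by omega) (le_max_left _ _)
        _ ≤ S.fs u n₀ := key _ (le_max_right _ _)
    exact absurd (lt_of_le_of_lt hufs (S.fs_lt huΓ hu0 n₀)) (lt_irrefl u)

/-- Goodness: if `Γ ⇒_n β` and `β < δ ≤ Γ` with `n > 1`, then `β ≤ fs δ n`. -/
lemma le_fs_of_reaches (hN : S.Nested) {β δ : Ordinal} {n : ℕ} (hn : 1 < n)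
    (h : S.Reaches n Γ β) (hβδ : β < δ) (hδΓ : δ ≤ Γ) : β ≤ S.fs δ n := by
  obtain ⟨k, hk⟩ := h
  set c : ℕ → Ordinal := fun i => (fun δ => S.fs δ n)^[i] Γ with hcdef
  have hstep : ∀ i : ℕ, c (i + 1) = S.fs (c i) n := by
    intro i
    simp only [hcdef, Function.iterate_succ_apply']
  have hcΓ : ∀ i : ℕ, c i ≤ Γ := by
    intro i
    induction i with
    | zero => simp [hcdef]
    | succ i ih =>
      rw [hstep i]
      exact le_trans (S.fs_le ih n) ih
  have hanti : ∀ i m : ℕ, i ≤ m → c m ≤ c i := by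
    intro i m him
    induction m, him using Nat.le_induction with
    | base => exact le_rfl
    | succ m him ih =>
      rw [hstep m]
      exact le_trans (S.fs_le (hcΓ m) n) ih
  have hkβ : c k = β := hk
  set T : Set ℕ := {i | c i < δ} with hTdef
  have hkT : k ∈ T := by
    simp only [hTdef, Set.mem_setOf_eq, hkβ]
    exact hβδ
  have hTne : T.Nonempty := ⟨k, hkT⟩
  have hmmem : sInf T ∈ T := Nat.sInf_mem hTne
  have hm0 : sInf T ≠ 0 := by
    intro h0
    rw [h0] at hmmem
    simp only [hTdef, Set.mem_setOf_eq, hcdef, Function.iterate_zero_apply] at hmmem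
    exact absurd hmmem (not_lt.mpr hδΓ)
  obtain ⟨i, hieq⟩ : ∃ i : ℕ, sInf T = i + 1 := ⟨sInf T - 1, by omega⟩
  have hiT : i ∉ T := fun hmm => absurd (Nat.sInf_le hmm) (by omega)
  have hδci : δ ≤ c i := not_lt.mp hiT
  have hci1 : c (i + 1) < δ := by rw [← hieq]; exact hmmem
  have hik : i + 1 ≤ k := by
    have := Nat.sInf_le hkT
    omega
  have hβci1 : β ≤ c (i + 1) := by
    rw [← hkβ]
    exact hanti _ _ hik
  rcases eq_or_lt_of_le hδci with heq | hlt
  · rw [heq, ← hstep i]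
    exact hβci1
  · have hnest := hN δ (c i) n hlt (hcΓ i) hn
    have h2 : S.fs (c i) n < δ := by rw [← hstep i]; exact hci1
    have h1 : S.fs (c i) n ≤ S.fs δ n :=
      le_of_not_gt fun hcon => hnest ⟨hcon, h2⟩
    rw [hstep i] at hβci1
    exact le_trans hβci1 h1

end FSSystem

/-- The norm `|α| = min {n > 1 : Γ ⇒_n α}`. -/
noncomputable def FSSystem.norm {Γ : Ordinal} (S : FSSystem Γ) (α : Ordinal) : ℕ :=
  sInf {n : ℕ | 1 < n ∧ S.Reaches n Γ α}

/-- Goodness of the norm: in a nested system, if `β < δ ≤ Γ` then `β ≤ δ[|β|]`. -/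
theorem nested_good_norm {Γ : Ordinal} (S : FSSystem Γ) (hN : S.Nested)
    (β δ : Ordinal) (h : β < δ) (hδ : δ ≤ Γ) :
    β ≤ S.fs δ (S.norm β) := by
  have hβΓ : β ≤ Γ := (lt_of_lt_of_le h hδ).le
  obtain ⟨n, hn1, hnr⟩ := S.exists_reaches hN hβΓ
  have hSne : {n : ℕ | 1 < n ∧ S.Reaches n Γ β}.Nonempty := ⟨n, hn1, hnr⟩
  have hmem := Nat.sInf_mem hSne
  exact S.le_fs_of_reaches hN hmem.1 hmem.2 h hδ
end

section
/- If A and B are smooth barriers with the same base such that ht(A) < ht(B), then there exist s ∈ A and t ∈ B with s a proper initial segment of t. -/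
open Ordinal

/-- The base of a family of finite increasing sequences: all naturals occurring in it. -/
def sbase (B : Set (List ℕ)) : Set ℕ := {n | ∃ s ∈ B, n ∈ s}

/-- A block: a non-degenerate front. Finite subsets of `ℕ` are identified with their increasing
enumerations. Every infinite subset of the base (given by its increasing enumeration `f`) has an
initial segment in `B`, and `B` is prefix-free. -/
structure IsBlock (B : Set (List ℕ)) : Prop where
  sorted : ∀ s ∈ B, s.Pairwise (· < ·)
  base_infinite : (sbase B).Infinite
  prefix_exists : ∀ f : ℕ → ℕ, StrictMono f → (∀ i, f i ∈ sbase B) →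
    ∃ k, (List.range k).map f ∈ B
  prefix_free : ∀ s ∈ B, ∀ t ∈ B, s <+: t → s = t

/-- Smoothness: for `s, t ∈ B` with `|s| < |t|` there is `i < |s|` with `s(i) < t(i)`. -/
def IsSmooth (B : Set (List ℕ)) : Prop :=
  ∀ s ∈ B, ∀ t ∈ B, s.length < t.length →
    ∃ i, ∃ (hi : i < s.length) (hi' : i < t.length), s.get ⟨i, hi⟩ < t.get ⟨i, hi'⟩

/-- The tree `T(B)`: the closure of `B` under initial segments. -/
def TreeOf (B : Set (List ℕ)) : Set (List ℕ) := {s | ∃ t ∈ B, s <+: t}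

/-- The child relation on the tree `T(B)`: `t` is a one-point extension of `s` lying in `T(B)`. -/
def childRel (B : Set (List ℕ)) (t s : List ℕ) : Prop :=
  t ∈ TreeOf B ∧ ∃ n, t = s ++ [n]

/-- The height of the node `s` in the well-founded tree `T(B)`. -/
noncomputable def nodeHt (B : Set (List ℕ)) (h : WellFounded (childRel B)) (s : List ℕ) :
    Ordinal :=
  (h.apply s).rank

/-- The height `ht(B)` of the front `B`: the height of the tree `T(B)`. -/
noncomputable def htB (B : Set (List ℕ)) (h : WellFounded (childRel B)) : Ordinal :=
  nodeHt B h []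

section Aux

variable {α : Type*}

/-- Rank is monotone under inclusion of relations. -/
theorem acc_rank_mono {r r' : α → α → Prop} (hsub : ∀ a b, r a b → r' a b)
    (h' : WellFounded r') : ∀ a (h : Acc r a), h.rank ≤ (h'.apply a).rank := by
  intro a
  induction a using h'.induction with
  | _ a ih =>
    intro h
    rw [h.rank_eq]
    apply Ordinal.iSup_le
    rintro ⟨b, hb⟩
    rw [Order.succ_le_iff]
    calc (h.inv hb).rank ≤ (h'.apply b).rank := ih b (hsub b a hb) _
      _ < (h'.apply a).rank := Acc.rank_lt_of_rel (h'.apply a) (hsub b a hb)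

/-- A strictly increasing sequence in an infinite set of naturals, starting above `M`. -/
private noncomputable def seqAbove (S : Set ℕ) (hS : S.Infinite) (M : ℕ) : ℕ → ℕ
  | 0 => (hS.exists_gt M).choose
  | n + 1 => (hS.exists_gt (seqAbove S hS M n)).choose

private theorem seqAbove_mem (S : Set ℕ) (hS : S.Infinite) (M : ℕ) (n : ℕ) :
    seqAbove S hS M n ∈ S := by
  cases n with
  | zero => exact (hS.exists_gt M).choose_spec.1
  | succ n => exact (hS.exists_gt (seqAbove S hS M n)).choose_spec.1

private theorem seqAbove_gt (S : Set ℕ) (hS : S.Infinite) (M : ℕ) (n : ℕ) :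
    M < seqAbove S hS M n := by
  induction n with
  | zero => exact (hS.exists_gt M).choose_spec.2
  | succ n ih => exact ih.trans ((hS.exists_gt (seqAbove S hS M n)).choose_spec.2)

private theorem seqAbove_strictMono (S : Set ℕ) (hS : S.Infinite) (M : ℕ) :
    StrictMono (seqAbove S hS M) :=
  strictMono_nat_of_lt_succ fun n => (hS.exists_gt (seqAbove S hS M n)).choose_spec.2

private theorem le_foldr_max (l : List ℕ) : ∀ x ∈ l, x ≤ l.foldr max 0 := by
  induction l with
  | nil => simp
  | cons a l ih =>
    intro x hx
    rcases List.mem_cons.1 hx with rfl | hx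
    · simp only [List.foldr_cons]
      exact le_max_left _ _
    · have := ih x hx
      simp only [List.foldr_cons]
      omega

/-- Any finite increasing sequence from an infinite set `S` extends to an infinite increasing
sequence from `S`. -/
theorem exists_ext (S : Set ℕ) (hS : S.Infinite) (t : List ℕ) (ht : t.Pairwise (· < ·))
    (htS : ∀ n ∈ t, n ∈ S) :
    ∃ f : ℕ → ℕ, StrictMono f ∧ (∀ i, f i ∈ S) ∧ (List.range t.length).map f = t := by
  classical
  set M := t.foldr max 0 with hM
  set g := seqAbove S hS M with hg
  refine ⟨fun n => if h : n < t.length then t.get ⟨n, h⟩ else g (n - t.length), ?_, ?_, ?_⟩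
  · apply strictMono_nat_of_lt_succ
    intro n
    by_cases h1 : n + 1 < t.length
    · have h0 : n < t.length := by omega
      simp only [dif_pos h1, dif_pos h0]
      exact (List.sortedLT_iff_strictMono_get.1 ht.sortedLT) (by simp)
    · by_cases h0 : n < t.length
      · simp only [dif_pos h0, dif_neg h1]
        have h2 : t.get ⟨n, h0⟩ ≤ M := le_foldr_max t _ (t.get_mem _)
        exact lt_of_le_of_lt h2 (seqAbove_gt S hS M _)
      · simp only [dif_neg h0, dif_neg h1]
        apply seqAbove_strictMono
        omega
  · intro i
    by_cases h : i < t.length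
    · simp only [dif_pos h]
      exact htS _ (t.get_mem _)
    · simp only [dif_neg h]
      exact seqAbove_mem S hS M _
  · apply List.ext_get
    · simp
    · intro i h1 h2
      simp only [List.get_eq_getElem, List.getElem_map, List.getElem_range]
      have hi : i < t.length := by simpa using h2
      simp [dif_pos hi]

/-- Prefixes of the map of a range. -/
theorem range_map_prefix (f : ℕ → ℕ) {m n : ℕ} (h : m ≤ n) :
    (List.range m).map f <+: (List.range n).map f := by
  apply List.IsPrefix.map
  have := List.take_prefix m (List.range n)
  rwa [List.take_range, min_eq_left h] at this

end Aux

/-- If `A` and `B` are smooth barriers with the same base and `ht(A) < ht(B)`, then some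
`s ∈ A` is a proper initial segment of some `t ∈ B`. -/
theorem smooth_barrier_lt_ht (A B : Set (List ℕ))
    (hA : IsBlock A) (hsmA : IsSmooth A) (hB : IsBlock B) (hsmB : IsSmooth B)
    (hbase : sbase A = sbase B)
    (hwfA : WellFounded (childRel A)) (hwfB : WellFounded (childRel B))
    (hht : htB A hwfA < htB B hwfB) :
    ∃ s ∈ A, ∃ t ∈ B, s <+: t ∧ s ≠ t := by
  by_contra hcon
  push_neg at hcon
  -- Under the negation, every element of `B` is a prefix of some element of `A`.
  have key : ∀ t ∈ B, ∃ s ∈ A, t <+: s := by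
    intro t htB'
    obtain ⟨f, hf, hfS, hft⟩ := exists_ext (sbase B) hB.base_infinite t
      (hB.sorted t htB') (fun n hn => ⟨t, htB', hn⟩)
    obtain ⟨k, hk⟩ := hA.prefix_exists f hf (by rw [hbase]; exact hfS)
    obtain ⟨k', hk'⟩ := hB.prefix_exists f hf hfS
    -- the `B`-prefix of `f` equals `t`
    have htt' : t = (List.range k').map f := by
      rcases le_total t.length k' with h | h
      · refine hB.prefix_free t htB' _ hk' ?_
        rw [← hft]; exact range_map_prefix f h
      · refine (hB.prefix_free _ hk' t htB' ?_).symm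
        rw [← hft]; exact range_map_prefix f h
    set s := (List.range k).map f with hs
    rcases le_total t.length k with h | h
    · -- if `t` were a proper prefix of `s`... compare `s` with `t` directly:
      rcases le_total k t.length with h2 | h2
      · -- s <+: t, so by `hcon` s = t, hence t <+: s
        have hpre : s <+: t := by rw [← hft]; exact range_map_prefix f h2
        have := hcon s hk t htB' hpre
        exact ⟨s, hk, this ▸ List.prefix_rfl⟩
      · exact ⟨s, hk, by rw [← hft]; exact range_map_prefix f h2⟩
    · have hpre : s <+: t := by rw [← hft]; exact range_map_prefix f h
      have := hcon s hk t htB' hpre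
      exact ⟨s, hk, this ▸ List.prefix_rfl⟩
  -- Hence `T(B) ⊆ T(A)` and `childRel B ⊆ childRel A`.
  have hTree : TreeOf B ⊆ TreeOf A := by
    rintro u ⟨t, htB', hut⟩
    obtain ⟨s, hsA, hts⟩ := key t htB'
    exact ⟨s, hsA, hut.trans hts⟩
  have hsub : ∀ a b, childRel B a b → childRel A a b := by
    rintro a b ⟨ha, n, rfl⟩
    exact ⟨hTree ha, n, rfl⟩
  have : htB B hwfB ≤ htB A hwfA :=
    acc_rank_mono hsub hwfA [] (hwfB.apply [])
  exact absurd hht (not_lt.2 this)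
end

section
/- Let B be a block. Then B is smooth if and only if for all s, t ∈ T(B) with |s| = |t| and ht_B(s) < ht_B(t) there exists i < |s| such that s(i) < t(i). -/
open Ordinal

/-! ### Auxiliary lemmas -/

lemma mem_sbase_of_tree {B : Set (List ℕ)} {s : List ℕ} (hs : s ∈ TreeOf B) {x : ℕ}
    (hx : x ∈ s) : x ∈ sbase B := by
  obtain ⟨u, huB, hsu⟩ := hs
  exact ⟨u, huB, hsu.subset hx⟩

lemma tree_sorted {B : Set (List ℕ)} (hB : IsBlock B) {s : List ℕ} (hs : s ∈ TreeOf B) :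
    s.Pairwise (· < ·) := by
  obtain ⟨u, huB, hsu⟩ := hs
  exact (hB.sorted u huB).sublist hsu.sublist

lemma no_child_of_mem {B : Set (List ℕ)} (hB : IsBlock B) {s t : List ℕ} (hs : s ∈ B)
    (h : childRel B t s) : False := by
  obtain ⟨⟨u, huB, htu⟩, m, rfl⟩ := h
  have hsu : s <+: u := (List.prefix_append s [m]).trans htu
  have : s = u := hB.prefix_free s hs u huB hsu
  subst this
  have := htu.length_le
  simp at this

/-- The auxiliary enumeration: first the elements of `s`, then the elements satisfying `p`
in increasing order. -/
noncomputable def extFun (s : List ℕ) (p : ℕ → Prop) : ℕ → ℕ := fun i =>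
  if h : i < s.length then s.get ⟨i, h⟩ else Nat.nth p (i - s.length)

/-- A node of the tree which is not in `B` has children with arbitrarily large labels. -/
lemma extend {B : Set (List ℕ)} (hB : IsBlock B) {s : List ℕ} (hs : s ∈ TreeOf B)
    (hsB : s ∉ B) (M : ℕ) : ∃ m, M < m ∧ s ++ [m] ∈ TreeOf B := by
  classical
  set K : ℕ := (M :: s).sum with hK
  set p : ℕ → Prop := fun n => n ∈ sbase B ∧ K < n with hp
  have hPinf : (setOf p).Infinite := by
    have : setOf p = sbase B \ {n : ℕ | n ≤ K} := by
      ext n; simp [hp, not_le]; exact Iff.rfl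
    rw [this]
    exact hB.base_infinite.diff (Set.finite_le_nat K)
  have hnth : ∀ j, p (Nat.nth p j) := fun j => Nat.nth_mem_of_infinite hPinf j
  have hnthMono : StrictMono (Nat.nth p) := Nat.nth_strictMono hPinf
  have hle : ∀ x ∈ M :: s, x ≤ K := fun x hx =>
    List.single_le_sum (fun _ _ => Nat.zero_le _) _ hx
  set n : ℕ := s.length with hn
  set f : ℕ → ℕ := extFun s p with hf
  have hfs : ∀ i (h : i < n), f i = s.get ⟨i, h⟩ := by
    intro i h; simp only [hf, extFun]; exact dif_pos (show i < s.length from h)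
  have hfg : ∀ i, ¬ i < n → f i = Nat.nth p (i - n) := by
    intro i h; simp only [hf, extFun]; exact dif_neg (show ¬ i < s.length from h)
  have hsort := tree_sorted hB hs
  have hmono : StrictMono f := by
    intro i j hij
    by_cases hi : i < n
    · by_cases hj : j < n
      · rw [hfs i hi, hfs j hj]
        exact hsort.sortedLT.strictMono_get (show (⟨i, hi⟩ : Fin n) < ⟨j, hj⟩ from hij)
      · rw [hfs i hi, hfg j hj]
        have h1 : s.get ⟨i, hi⟩ ≤ K := hle _ (List.mem_cons_of_mem _ (s.get_mem _))
        exact lt_of_le_of_lt h1 (hnth (j - n)).2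
    · have hj : ¬ j < n := fun h => hi (hij.trans h)
      rw [hfg i hi, hfg j hj]
      exact hnthMono (by omega)
  have hbase : ∀ i, f i ∈ sbase B := by
    intro i
    by_cases hi : i < n
    · rw [hfs i hi]; exact mem_sbase_of_tree hs (s.get_mem _)
    · rw [hfg i hi]; exact (hnth _).1
  obtain ⟨k, hk⟩ := hB.prefix_exists f hmono hbase
  have hmap : ∀ j, j ≤ n → (List.range j).map f = s.take j := by
    intro j hj
    apply List.ext_get
    · simp [hn.symm ▸ hj]
    · intro i h1 h2
      have hi : i < j := by simpa using h1
      have hin : i < n := lt_of_lt_of_le hi hj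
      simp [hfs i hin, List.getElem_take]
  by_cases hkn : k ≤ n
  · exfalso
    rw [hmap k hkn] at hk
    obtain ⟨u, huB, hsu⟩ := hs
    have h1 : s.take k <+: u := (List.take_prefix k s).trans hsu
    have h2 : s.take k = u := hB.prefix_free _ hk u huB h1
    have h3 : s <+: s.take k := h2 ▸ hsu
    have h4 : s = s.take k := by
      have hl1 := h3.length_le
      have hl2 : (s.take k).length ≤ s.length := by simp
      exact h3.eq_of_length (le_antisymm hl1 hl2)
    rw [← h4] at hk
    exact hsB hk
  · push_neg at hkn
    refine ⟨f n, ?_, ?_⟩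
    · have : f n = Nat.nth p 0 := by rw [hfg n (lt_irrefl n)]; simp
      rw [this]
      exact lt_of_le_of_lt (hle M List.mem_cons_self) (hnth 0).2
    · have he1 : (List.range (n + 1)).map f = s ++ [f n] := by
        rw [List.range_succ, List.map_append, hmap n le_rfl, List.take_length]
        simp
      have he2 : (List.range (n + 1)).map f <+: (List.range k).map f := by
        have : (List.range k).take (n + 1) = List.range (n + 1) := by
          rw [List.take_range, min_eq_left (by omega)]
        rw [← this]
        exact (List.take_prefix _ _).map f
      exact ⟨(List.range k).map f, hk, he1 ▸ he2⟩

lemma rank_le_of_pointwise {B : Set (List ℕ)} (hB : IsBlock B)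
    (hwf : WellFounded (childRel B)) (hsm : IsSmooth B) :
    ∀ t, t ∈ TreeOf B → ∀ s ∈ TreeOf B, s.length = t.length →
      (∀ i (hi : i < t.length) (hi' : i < s.length), t.get ⟨i, hi⟩ ≤ s.get ⟨i, hi'⟩) →
      nodeHt B hwf t ≤ nodeHt B hwf s := by
  intro t
  induction t using hwf.induction with
  | _ t IH =>
    intro ht s hs hlen hpt
    have key : ∀ t', childRel B t' t → nodeHt B hwf t' < nodeHt B hwf s := by
      intro t' hch
      obtain ⟨ht', m, rfl⟩ := hch
      by_cases hsB : s ∈ B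
      · exfalso
        obtain ⟨u, huB, hpre⟩ := ht'
        have htu : t <+: u := (List.prefix_append t [m]).trans hpre
        have hlu : s.length < u.length := by
          have := hpre.length_le
          simp only [List.length_append, List.length_singleton] at this
          omega
        obtain ⟨i, hi, hi', hlt⟩ := hsm s hsB u huB hlu
        have hit : i < t.length := by omega
        have heq : t.get ⟨i, hit⟩ = u.get ⟨i, hi'⟩ := by
          simpa using htu.getElem hit
        have := hpt i hit hi
        simp only [List.get_eq_getElem] at hlt heq this
        omega
      · obtain ⟨m', hmm', hs'⟩ := extend hB hs hsB m
        have hch' : childRel B (s ++ [m']) s := ⟨hs', m', rfl⟩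
        have h1 : nodeHt B hwf (t ++ [m]) ≤ nodeHt B hwf (s ++ [m']) := by
          apply IH (t ++ [m]) ⟨ht', m, rfl⟩ ht' (s ++ [m']) hs'
          · simp [hlen]
          · intro i hi hi'
            simp only [List.length_append, List.length_singleton] at hi hi'
            simp only [List.get_eq_getElem]
            by_cases hit : i < t.length
            · rw [List.getElem_append_left hit, List.getElem_append_left (by omega)]
              have := hpt i hit (by omega)
              simpa using this
            · have hit' : i = t.length := by omega
              subst hit'
              rw [List.getElem_concat_length,
                List.getElem_append_right (le_of_eq hlen)]
              simpa [hlen] using hmm'.le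
              rfl
        have h2 : nodeHt B hwf (s ++ [m']) < nodeHt B hwf s :=
          Acc.rank_lt_of_rel (hwf.apply s) hch'
        exact lt_of_le_of_lt h1 h2
    show (hwf.apply t).rank ≤ nodeHt B hwf s
    rw [Acc.rank_eq]
    apply Ordinal.iSup_le
    rintro ⟨t', h⟩
    rw [Order.succ_le_iff]
    exact key t' h

lemma nodeHt_eq_zero {B : Set (List ℕ)} (hB : IsBlock B) (hwf : WellFounded (childRel B))
    {s : List ℕ} (hs : s ∈ B) : nodeHt B hwf s = 0 := by
  haveI : IsEmpty {b // childRel B b s} := ⟨fun ⟨b, h⟩ => no_child_of_mem hB hs h⟩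
  show (hwf.apply s).rank = 0
  rw [Acc.rank_eq]
  simp [ciSup_of_empty]

/-- Alternative characterization of smoothness: a block `B` is smooth iff for all
`s, t ∈ T(B)` with `|s| = |t|` and `ht_B(s) < ht_B(t)` there is `i < |s|` with
`s(i) < t(i)`. -/
theorem smooth_iff_tree_condition (B : Set (List ℕ)) (hB : IsBlock B)
    (hwf : WellFounded (childRel B)) :
    IsSmooth B ↔
      ∀ s ∈ TreeOf B, ∀ t ∈ TreeOf B, s.length = t.length →
        nodeHt B hwf s < nodeHt B hwf t →
        ∃ i, ∃ (hi : i < s.length) (hi' : i < t.length), s.get ⟨i, hi⟩ < t.get ⟨i, hi'⟩ := by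
  constructor
  · intro hsm s hsT t htT hlen hht
    by_contra hcon
    push_neg at hcon
    have hpt : ∀ i (hi : i < t.length) (hi' : i < s.length),
        t.get ⟨i, hi⟩ ≤ s.get ⟨i, hi'⟩ := by
      intro i hi hi'
      exact hcon i hi' hi
    have := rank_le_of_pointwise hB hwf hsm t htT s hsT hlen hpt
    exact absurd hht (not_lt.2 this)
  · intro hcond s hsB t htB hlen
    have hsT : s ∈ TreeOf B := ⟨s, hsB, List.prefix_refl s⟩
    set t' : List ℕ := t.take s.length with ht'
    have ht'T : t' ∈ TreeOf B := ⟨t, htB, List.take_prefix _ _⟩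
    have hlen' : s.length = t'.length := by simp [ht', min_eq_left (le_of_lt hlen)]
    -- the child of t'
    have hchild : childRel B (t.take (s.length + 1)) t' := by
      refine ⟨⟨t, htB, List.take_prefix _ _⟩, t.get ⟨s.length, hlen⟩, ?_⟩
      rw [ht']
      exact (List.take_concat_get (l := t) (i := s.length) hlen).symm ▸ (by simp)
    have hpos : nodeHt B hwf s < nodeHt B hwf t' := by
      rw [nodeHt_eq_zero hB hwf hsB]
      have h0 : nodeHt B hwf (t.take (s.length + 1)) < nodeHt B hwf t' :=
        Acc.rank_lt_of_rel (hwf.apply t') hchild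
      exact lt_of_le_of_lt zero_le h0
    obtain ⟨i, hi, hi', hlt⟩ := hcond s hsT t' ht'T hlen' hpos
    refine ⟨i, hi, lt_of_lt_of_le hi (le_of_lt hlen), ?_⟩
    have : t'.get ⟨i, hi'⟩ = t.get ⟨i, lt_of_lt_of_le hi (le_of_lt hlen)⟩ := by
      simp [ht', List.getElem_take]
    rw [← this]
    exact hlt
end
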